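/- Let k be an algebraically closed field and 2 ≤ d ≤ n − 3. Let t₁, …, t_n ∈ k be pairwise distinct, let λ₁, …, λ_n ∈ k be nonzero, and let A ∈ k^{(d+1)×n} be the matrix with entries A_{j,i} = λ_i·t_i^j for 0 ≤ j ≤ d (so the columns of A are nonzero multiples of points on the rational normal curve of degree d). Let B ∈ k^{(n−d−1)×n} be an affine Gale transform of A (rank B = n − d − 1 and A·Bᵀ = 0). Then there exist an invertible matrix g ∈ k^{(n−d−1)×(n−d−1)} and nonzero scalars μ₁, …, μ_n ∈ k such that (g·B)_{j,i} = μ_i·t_i^j for all 0 ≤ j ≤ n − d − 2 and all i. In other words, every Gale transform of a configuration of distinct points on a rational normal curve of degree d in ℙ^d is a configuration of distinct points on a rational normal curve of degree n − d − 2 in ℙ^{n−d−2}. -/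

import Mathlib

open Polynomial Finset

/-- Key Lagrange identity: for pairwise distinct nodes `v` and `r + 1 < n`,
`∑ i, v i ^ r * ∏_{l ≠ i} (v i - v l)⁻¹ = 0`. -/
lemma goppa_sum_aux {F : Type*} [Field F] {n : ℕ} (v : Fin n → F)
    (hv : Function.Injective v) {r : ℕ} (hr : r + 1 < n) :
    ∑ i, v i ^ r * Lagrange.nodalWeight Finset.univ v i = 0 := by
  classical
  have hvs : Set.InjOn v (Finset.univ : Finset (Fin n)) := hv.injOn
  have hcard : (Finset.univ : Finset (Fin n)).card = n := by simp
  have hdeg : (X ^ r : F[X]).degree < ((Finset.univ : Finset (Fin n)).card : WithBot ℕ) := by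
    rw [hcard, Polynomial.degree_X_pow]
    exact_mod_cast (by omega : r < n)
  have h1 : (X ^ r : F[X]) =
      Lagrange.interpolate Finset.univ v (fun i => (X ^ r : F[X]).eval (v i)) :=
    Lagrange.eq_interpolate hvs hdeg
  have hbasis : ∀ i : Fin n, (Lagrange.basis Finset.univ v i).coeff (n - 1)
      = Lagrange.nodalWeight Finset.univ v i := by
    intro i
    have hnd : (Lagrange.basis Finset.univ v i).natDegree = n - 1 := by
      rw [Lagrange.natDegree_basis hvs (Finset.mem_univ i), hcard]
    rw [← hnd, ← Polynomial.leadingCoeff, Lagrange.basis, Polynomial.leadingCoeff_prod,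
      Lagrange.nodalWeight]
    refine Finset.prod_congr rfl fun j _ => ?_
    rw [Lagrange.basisDivisor, Polynomial.leadingCoeff_mul, Polynomial.leadingCoeff_C,
      (Polynomial.monic_X_sub_C (v j)).leadingCoeff, mul_one]
  have h2 := congrArg (fun p : F[X] => p.coeff (n - 1)) h1
  simp only [Lagrange.interpolate_apply, Polynomial.finset_sum_coeff, Polynomial.coeff_C_mul,
    Polynomial.eval_pow, Polynomial.eval_X, Polynomial.coeff_X_pow] at h2
  rw [if_neg (by omega : ¬ n - 1 = r)] at h2
  simp only [hbasis] at h2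
  exact h2.symm

/-- The rows of a scaled Vandermonde matrix with `p ≤ n` rows and distinct nodes are
linearly independent. -/
lemma goppa_li_aux {F : Type*} [Field F] {n p : ℕ} (hp : p ≤ n) (v : Fin n → F)
    (hv : Function.Injective v) (w : Fin n → F) (hw : ∀ i, w i ≠ 0)
    (M : Matrix (Fin p) (Fin n) F) (hM : ∀ j i, M j i = w i * v i ^ (j : ℕ)) :
    LinearIndependent F M := by
  classical
  refine Fintype.linearIndependent_iff.mpr ?_
  intro c hc j
  set P : F[X] := ∑ j : Fin p, C (c j) * X ^ (j : ℕ) with hP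
  have hdeg : P.degree < ((Finset.univ : Finset (Fin n)).card : WithBot ℕ) := by
    rw [Finset.card_univ, Fintype.card_fin]
    refine lt_of_le_of_lt (Polynomial.degree_sum_le _ _) ?_
    rw [Finset.sup_lt_iff (show (⊥ : WithBot ℕ) < (n : ℕ) from by exact_mod_cast WithBot.bot_lt_coe n)]
    intro b _
    refine lt_of_le_of_lt (Polynomial.degree_C_mul_X_pow_le _ _) ?_
    exact_mod_cast (lt_of_lt_of_le b.isLt hp)
  have hzero : ∀ i : Fin n, P.eval (v i) = 0 := by
    intro i
    have h0 := congrFun hc i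
    simp only [Finset.sum_apply, Pi.smul_apply, smul_eq_mul, Pi.zero_apply, hM] at h0
    have h1 : w i * ∑ j : Fin p, c j * v i ^ (j : ℕ) = 0 := by
      rw [Finset.mul_sum]; rw [← h0]; exact Finset.sum_congr rfl fun j _ => by ring
    have h2 : ∑ j : Fin p, c j * v i ^ (j : ℕ) = 0 :=
      (mul_eq_zero.mp h1).resolve_left (hw i)
    simp only [hP, Polynomial.eval_finset_sum, Polynomial.eval_mul, Polynomial.eval_C,
      Polynomial.eval_pow, Polynomial.eval_X]
    exact h2
  have hP0 : P = 0 :=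
    Polynomial.eq_zero_of_degree_lt_of_eval_index_eq_zero _ hv.injOn hdeg fun i _ => hzero i
  have hcoeff : P.coeff (j : ℕ) = c j := by
    simp only [hP, Polynomial.finset_sum_coeff, Polynomial.coeff_C_mul, Polynomial.coeff_X_pow]
    rw [Finset.sum_eq_single j (fun b _ hbj => by
      rw [if_neg (fun h => hbj (Fin.ext h.symm)), mul_zero]) (by simp)]
    simp
  rw [← hcoeff, hP0, Polynomial.coeff_zero]

/-- Goppa's theorem (Proposition 4.12), at the level of matrices: every affine Gale
transform of a configuration of distinct points on the rational normal curve of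
degree `d` in `ℙ^d` is (up to `GL_{n−d−1}`) a configuration of distinct points on
the rational normal curve of degree `n − d − 2` in `ℙ^{n−d−2}`. -/
theorem gale_of_rationalNormalCurve {k : Type*} [Field k] [IsAlgClosed k] {d n : ℕ}
    (hd : 2 ≤ d) (hn : d + 3 ≤ n)
    (t : Fin n → k) (ht : Function.Injective t)
    (lam : Fin n → k) (hlam : ∀ i, lam i ≠ 0)
    (A : Matrix (Fin (d + 1)) (Fin n) k)
    (hA : ∀ (j : Fin (d + 1)) (i : Fin n), A j i = lam i * t i ^ (j : ℕ))
    (B : Matrix (Fin (n - d - 1)) (Fin n) k)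
    (hB : B.rank = n - d - 1) (hAB : A * B.transpose = 0) :
    ∃ (g : Matrix (Fin (n - d - 1)) (Fin (n - d - 1)) k) (_ : IsUnit g)
      (mu : Fin n → k), (∀ i, mu i ≠ 0) ∧
        ∀ (j : Fin (n - d - 1)) (i : Fin n), (g * B) j i = mu i * t i ^ (j : ℕ) := by
  classical
  set μ : Fin n → k := fun i => (lam i)⁻¹ * Lagrange.nodalWeight Finset.univ t i with hμdef
  have hμ : ∀ i, μ i ≠ 0 := fun i =>
    mul_ne_zero (inv_ne_zero (hlam i))
      (Lagrange.nodalWeight_ne_zero ht.injOn (Finset.mem_univ i))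
  set C : Matrix (Fin (n - d - 1)) (Fin n) k :=
    Matrix.of fun j i => μ i * t i ^ (j : ℕ) with hCdef
  -- rank of A
  have hAli : LinearIndependent k A := goppa_li_aux (by omega) t ht lam hlam A hA
  have hArank : Module.finrank k (LinearMap.range A.mulVecLin) = d + 1 := by
    have := hAli.rank_matrix
    rwa [Fintype.card_fin] at this
  have hker : Module.finrank k (LinearMap.ker A.mulVecLin) = n - d - 1 := by
    have h1 := LinearMap.finrank_range_add_finrank_ker A.mulVecLin
    rw [Module.finrank_fintype_fun_eq_card, Fintype.card_fin, hArank] at h1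
    omega
  -- rows of B span the kernel of A
  have hBrow : ∀ j, B j ∈ LinearMap.ker A.mulVecLin := by
    intro j
    rw [LinearMap.mem_ker]
    funext a
    have h := congrFun (congrFun hAB a) j
    simpa [Matrix.mul_apply, Matrix.mulVecLin_apply, Matrix.mulVec, dotProduct,
      Matrix.transpose_apply] using h
  have hspanfin : Module.finrank k (Submodule.span k (Set.range B)) = n - d - 1 := by
    have := Matrix.rank_eq_finrank_span_row B
    rw [hB] at this
    exact this.symm
  have hspanB : Submodule.span k (Set.range B) = LinearMap.ker A.mulVecLin :=
    Submodule.eq_of_le_of_finrank_le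
      (Submodule.span_le.mpr (Set.range_subset_iff.mpr hBrow))
      (by rw [hspanfin, hker])
  -- A * C.transpose = 0
  have hACt : A * C.transpose = 0 := by
    ext a b
    rw [Matrix.mul_apply, Matrix.zero_apply]
    have hb := b.isLt
    have ha := a.isLt
    have key := goppa_sum_aux t ht (r := (a : ℕ) + (b : ℕ)) (by omega)
    rw [← key]
    refine Finset.sum_congr rfl fun i _ => ?_
    rw [Matrix.transpose_apply, hA, hCdef, hμdef]
    simp only [Matrix.of_apply]
    linear_combination (t i ^ (a : ℕ) * t i ^ (b : ℕ) * Lagrange.nodalWeight Finset.univ t i) *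
      mul_inv_cancel₀ (hlam i)
  -- rows of C lie in the span of the rows of B
  have hCrow : ∀ j, C j ∈ Submodule.span k (Set.range B) := by
    rw [hspanB]
    intro j
    rw [LinearMap.mem_ker]
    funext a
    have h := congrFun (congrFun hACt a) j
    simpa [Matrix.mul_apply, Matrix.mulVecLin_apply, Matrix.mulVec, dotProduct,
      Matrix.transpose_apply] using h
  have hg : ∀ j, ∃ c : Fin (n - d - 1) → k, ∑ l, c l • B l = C j := fun j =>
    Submodule.mem_span_range_iff_exists_fun k |>.mp (hCrow j)
  choose g hgspec using hg
  have hgB : Matrix.of g * B = C := by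
    ext j i
    rw [Matrix.mul_apply]
    have h := congrFun (hgspec j) i
    simpa [Finset.sum_apply, Pi.smul_apply, smul_eq_mul] using h
  -- rows of C are linearly independent
  have hCli : LinearIndependent k C :=
    goppa_li_aux (by omega) t ht μ hμ C (fun j i => rfl)
  -- g is a unit
  have hgu : IsUnit (Matrix.of g) := by
    rw [← Matrix.vecMul_injective_iff_isUnit]
    have hz : ∀ z, Matrix.vecMul z (Matrix.of g) = 0 → z = 0 := by
      intro z hz0
      have h1 : Matrix.vecMul z C = 0 := by
        rw [← hgB, ← Matrix.vecMul_vecMul, hz0, Matrix.zero_vecMul]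
      have h2 : ∑ j, z j • C j = 0 := by
        funext i
        have := congrFun h1 i
        simpa [Matrix.vecMul, dotProduct, Finset.sum_apply, Pi.smul_apply,
          smul_eq_mul] using this
      funext j
      exact Fintype.linearIndependent_iff.mp hCli z h2 j
    intro x y hxy
    dsimp only at hxy
    have h0 : Matrix.vecMul (x - y) (Matrix.of g) = 0 := by
      rw [Matrix.sub_vecMul, hxy, sub_self]
    have := hz _ h0
    exact sub_eq_zero.mp this
  refine ⟨Matrix.of g, hgu, μ, hμ, fun j i => ?_⟩
  rw [hgB]
  rfl
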